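/- Let n ≥ 1 and consider the instance with residents r_1,…,r_{⌊n/2⌋} and r'_1,…,r'_{⌈n/2⌉} and hospitals h_1,…,h_{⌊n/2⌋} with quotas [1,1] and x with quotas [⌈n/2⌉,⌈n/2⌉]; each r_i prefers x to h_i, each r'_i accepts only x, h_i accepts only r_i, and x is indifferent among all residents. Then N = {(r_i,h_i)} ∪ {(r'_i,x)} is stable with s(N) = 1 + ⌊n/2⌋, and the matching M̃ assigning ⌈n/2⌉ residents (the r_i's, plus r'_1 if n is odd) to x is stable with s(M̃) = 1. Hence, for instances with strict residents' lists drawn from a master list, the gap OPT/WST is at least 1 + ⌊n/2⌋. -/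

import Mathlib

/-- An instance of the Hospitals/Residents problem with ties, incomplete lists,
and lower/upper quotas (HRT-MSLQ).  Preferences are given by rank functions
(smaller rank = more preferred); ties are allowed (equal ranks). -/
structure HRTInstance (R H : Type) [Fintype R] [DecidableEq R] [Fintype H] [DecidableEq H] where
  acc : R → H → Prop
  rRank : R → H → ℕ
  hRank : H → R → ℕ
  lq : H → ℕ
  uq : H → ℕ

namespace HRTInstance

variable {R H : Type} [Fintype R] [DecidableEq R] [Fintype H] [DecidableEq H]

/-- The set of residents assigned to hospital `h` by assignment `M`. -/
def assignees (M : R → Option H) (h : H) : Finset R :=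
  Finset.univ.filter (fun r => M r = some h)

/-- `M` is a matching: it respects acceptability and upper quotas. -/
def IsMatching (I : HRTInstance R H) (M : R → Option H) : Prop :=
  (∀ r h, M r = some h → I.acc r h) ∧ ∀ h, (assignees M h).card ≤ I.uq h

/-- `(r, h)` is a blocking pair for `M`. -/
def Blocks (I : HRTInstance R H) (M : R → Option H) (r : R) (h : H) : Prop :=
  I.acc r h ∧
  (M r = none ∨ ∃ h', M r = some h' ∧ I.rRank r h < I.rRank r h') ∧
  ((assignees M h).card < I.uq h ∨ ∃ r' ∈ assignees M h, I.hRank h r < I.hRank h r')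

/-- `M` is a stable matching. -/
def IsStable (I : HRTInstance R H) (M : R → Option H) : Prop :=
  I.IsMatching M ∧ ∀ r h, ¬ I.Blocks M r h

/-- The total satisfaction ratio (score) of `M`:
`s(M) = Σ_h min{1, |M(h)|/ℓ(h)}`, with score `1` when `ℓ(h) = 0`. -/
def score (I : HRTInstance R H) (M : R → Option H) : ℚ :=
  ∑ h, if I.lq h = 0 then 1
       else min 1 (((assignees M h).card : ℚ) / (I.lq h : ℚ))

end HRTInstance

/-- Residents `r_i = .inl i` (`i < ⌊n/2⌋`) and `r'_i = .inr i` (`i < ⌈n/2⌉`);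
hospitals `h_i = .inl i` with quotas `[1,1]` and `x = .inr ()` with quotas
`[⌈n/2⌉,⌈n/2⌉]`.  Each `r_i` prefers `x` to `h_i`; each `r'_i` accepts only `x`;
`h_i` accepts only `r_i`; `x` is indifferent among all residents. -/
def I19 (n : ℕ) : HRTInstance (Fin (n / 2) ⊕ Fin ((n + 1) / 2)) (Fin (n / 2) ⊕ Unit) where
  acc r h := match r, h with
    | .inl i, .inl j => i = j
    | .inl _, .inr _ => True
    | .inr _, .inl _ => False
    | .inr _, .inr _ => True
  rRank _ h := match h with
    | .inl _ => 1
    | .inr _ => 0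
  hRank _ _ := 0
  lq h := match h with
    | .inl _ => 1
    | .inr _ => (n + 1) / 2
  uq h := match h with
    | .inl _ => 1
    | .inr _ => (n + 1) / 2

def N19 (n : ℕ) : (Fin (n / 2) ⊕ Fin ((n + 1) / 2)) → Option (Fin (n / 2) ⊕ Unit)
  | .inl i => some (.inl i)
  | .inr _ => some (.inr ())

/-- `M̃` assigns the `r_i`'s to `x`, plus `r'_1` if `n` is odd. -/
def M19 (n : ℕ) : (Fin (n / 2) ⊕ Fin ((n + 1) / 2)) → Option (Fin (n / 2) ⊕ Unit)
  | .inl _ => some (.inr ())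
  | .inr i => if n % 2 = 1 ∧ i.val = 0 then some (.inr ()) else none
namespace aux19

lemma assignN_inl (n : ℕ) (j : Fin (n/2)) :
    HRTInstance.assignees (N19 n) (Sum.inl j) = {Sum.inl j} := by
  ext r
  cases r with
  | inl i => simp only [HRTInstance.assignees, Finset.mem_filter]; simp [N19]
  | inr i => simp only [HRTInstance.assignees, Finset.mem_filter]; simp [N19]

lemma assignN_x (n : ℕ) :
    HRTInstance.assignees (N19 n) (Sum.inr ()) = Finset.univ.image Sum.inr := by
  ext r
  cases r with
  | inl i => simp only [HRTInstance.assignees, Finset.mem_filter]; simp [N19]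
  | inr i => simp only [HRTInstance.assignees, Finset.mem_filter]; simp [N19]

lemma cardN_x (n : ℕ) :
    (HRTInstance.assignees (N19 n) (Sum.inr ())).card = (n+1)/2 := by
  rw [assignN_x, Finset.card_image_of_injective _ Sum.inr_injective]
  simp

lemma assignM_inl (n : ℕ) (j : Fin (n/2)) :
    HRTInstance.assignees (M19 n) (Sum.inl j) = ∅ := by
  ext r
  cases r with
  | inl i => simp only [HRTInstance.assignees, Finset.mem_filter]; simp [M19]
  | inr i =>
      simp only [HRTInstance.assignees, Finset.mem_filter, Finset.mem_univ,
        true_and, Finset.notMem_empty, iff_false]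
      simp only [M19]
      split <;> simp

lemma assignM_x (n : ℕ) :
    HRTInstance.assignees (M19 n) (Sum.inr ()) =
      Finset.univ.image Sum.inl ∪
        ((Finset.univ.filter fun i : Fin ((n+1)/2) => n % 2 = 1 ∧ i.val = 0).image Sum.inr) := by
  ext r
  cases r with
  | inl i => simp only [HRTInstance.assignees, Finset.mem_filter]; simp [M19]
  | inr i =>
      simp only [HRTInstance.assignees, Finset.mem_filter, Finset.mem_univ,
        true_and, Finset.mem_union, Finset.mem_image]
      simp only [M19]
      split <;> simp_all

lemma cardM_x (n : ℕ) (hn : 1 ≤ n) :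
    (HRTInstance.assignees (M19 n) (Sum.inr ())).card = (n+1)/2 := by
  rw [assignM_x, Finset.card_union_of_disjoint (by simp [Finset.disjoint_left]),
    Finset.card_image_of_injective _ Sum.inl_injective,
    Finset.card_image_of_injective _ Sum.inr_injective]
  by_cases h : n % 2 = 1
  · have hpos : 0 < (n+1)/2 := by omega
    have : (Finset.univ.filter fun i : Fin ((n+1)/2) => n % 2 = 1 ∧ i.val = 0)
        = {(⟨0, hpos⟩ : Fin ((n+1)/2))} := by
      ext i; simp [h, Fin.ext_iff]
    rw [this]
    simp
    omega
  · have : (Finset.univ.filter fun i : Fin ((n+1)/2) => n % 2 = 1 ∧ i.val = 0)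
        = ∅ := by
      ext i; simp [h]
    rw [this]
    simp
    omega

end aux19

theorem stmt_19' (n : ℕ) (hn : 1 ≤ n) :
    (I19 n).IsStable (N19 n) ∧ (I19 n).IsStable (M19 n) ∧
    (I19 n).score (N19 n) = 1 + ((n / 2 : ℕ) : ℚ) ∧
    (I19 n).score (M19 n) = 1 := by
  refine ⟨⟨⟨?_, ?_⟩, ?_⟩, ⟨⟨?_, ?_⟩, ?_⟩, ?_, ?_⟩
  · rintro (i | i) (j | j) hm <;> simp_all [N19, I19]
  · rintro (j | j)
    · rw [aux19.assignN_inl]; simp [I19]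
    · rw [show (Sum.inr j : Fin (n/2) ⊕ Unit) = Sum.inr () from rfl, aux19.cardN_x]
      simp [I19]
  · rintro (i | i) (j | j) ⟨hacc, himp, hcap⟩
    · simp_all [I19, N19]
    · rcases hcap with hc | ⟨r', _, hr'⟩
      · rw [show (Sum.inr j : Fin (n/2) ⊕ Unit) = Sum.inr () from rfl, aux19.cardN_x] at hc
        simp [I19] at hc
      · simp [I19] at hr'
    · simp [I19] at hacc
    · simp_all [I19, N19]
  · rintro (i | i) (j | j) hm <;> simp_all [I19, M19]
  · rintro (j | j)
    · rw [aux19.assignM_inl]; simp [I19]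
    · rw [show (Sum.inr j : Fin (n/2) ⊕ Unit) = Sum.inr () from rfl, aux19.cardM_x n hn]
      simp [I19]
  · rintro (i | i) (j | j) ⟨hacc, himp, hcap⟩
    · simp_all [I19, M19]
    · simp_all [I19, M19]
    · simp [I19] at hacc
    · rcases hcap with hc | ⟨r', _, hr'⟩
      · rw [show (Sum.inr j : Fin (n/2) ⊕ Unit) = Sum.inr () from rfl, aux19.cardM_x n hn] at hc
        simp [I19] at hc
      · simp [I19] at hr'
  · rw [HRTInstance.score, Fintype.sum_sum_type]
    have h1 : ∀ j : Fin (n/2),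
        (if (I19 n).lq (Sum.inl j) = 0 then (1:ℚ)
         else min 1 (((HRTInstance.assignees (N19 n) (Sum.inl j)).card : ℚ) / ((I19 n).lq (Sum.inl j) : ℚ))) = 1 := by
      intro j
      rw [aux19.assignN_inl]
      simp [I19]
    have h2 : ∀ u : Unit,
        (if (I19 n).lq (Sum.inr u) = 0 then (1:ℚ)
         else min 1 (((HRTInstance.assignees (N19 n) (Sum.inr u)).card : ℚ) / ((I19 n).lq (Sum.inr u) : ℚ))) = 1 := by
      intro u
      have hpos : 0 < (n+1)/2 := by omega
      rw [show (Sum.inr u : Fin (n/2) ⊕ Unit) = Sum.inr () from rfl, aux19.cardN_x]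
      have : (((n+1)/2 : ℕ) : ℚ) ≠ 0 := Nat.cast_ne_zero.mpr hpos.ne'
      simp [I19, hpos.ne', div_self this]
    simp only [h1, h2]
    simp [add_comm]
  · rw [HRTInstance.score, Fintype.sum_sum_type]
    have h1 : ∀ j : Fin (n/2),
        (if (I19 n).lq (Sum.inl j) = 0 then (1:ℚ)
         else min 1 (((HRTInstance.assignees (M19 n) (Sum.inl j)).card : ℚ) / ((I19 n).lq (Sum.inl j) : ℚ))) = 0 := by
      intro j
      rw [aux19.assignM_inl]
      simp [I19]
    have h2 : ∀ u : Unit,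
        (if (I19 n).lq (Sum.inr u) = 0 then (1:ℚ)
         else min 1 (((HRTInstance.assignees (M19 n) (Sum.inr u)).card : ℚ) / ((I19 n).lq (Sum.inr u) : ℚ))) = 1 := by
      intro u
      have hpos : 0 < (n+1)/2 := by omega
      rw [show (Sum.inr u : Fin (n/2) ⊕ Unit) = Sum.inr () from rfl, aux19.cardM_x n hn]
      have : (((n+1)/2 : ℕ) : ℚ) ≠ 0 := Nat.cast_ne_zero.mpr hpos.ne'
      simp [I19, hpos.ne', div_self this]
    simp only [h1, h2]
    simp

/-- `N` is stable with `s(N) = 1 + ⌊n/2⌋` and `M̃` is stable with `s(M̃) = 1`;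
hence, for strict residents' lists drawn from a master list, `OPT/WST ≥ 1 + ⌊n/2⌋`. -/
theorem stmt_19 (n : ℕ) (hn : 1 ≤ n) :
    (I19 n).IsStable (N19 n) ∧ (I19 n).IsStable (M19 n) ∧
    (I19 n).score (N19 n) = 1 + ((n / 2 : ℕ) : ℚ) ∧
    (I19 n).score (M19 n) = 1 := by
  exact stmt_19' n hn
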